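/- For every integer k ≥ 1, if G is a finite connected graph with radius r, then γ_k(G) ≥ 2r/(2k + 1). -/
import Mathlib


/-- `S` is a distance `k`-dominating set of `G`: every vertex is joined to some
vertex of `S` by a path (walk) of length at most `k`. -/
def SimpleGraph.IsKDomSet {V : Type*} (G : SimpleGraph V) (k : ℕ) (S : Set V) : Prop :=
  ∀ v : V, ∃ u ∈ S, ∃ p : G.Walk u v, p.length ≤ k

/-- The distance `k`-domination number of `G`: the minimum cardinality of a
distance `k`-dominating set. -/
noncomputable def SimpleGraph.kDomNum {V : Type*} (G : SimpleGraph V) (k : ℕ) : ℕ :=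
  sInf {n : ℕ | ∃ S : Set V, G.IsKDomSet k S ∧ S.ncard = n}

/-- The eccentricity of a vertex: the maximum distance from it to a vertex of the graph. -/
noncomputable def SimpleGraph.ecc {V : Type*} (G : SimpleGraph V) (v : V) : ℕ :=
  sSup {d : ℕ | ∃ u : V, G.dist v u = d}

/-- The radius of a graph: the minimum eccentricity among all vertices. -/
noncomputable def SimpleGraph.rad {V : Type*} (G : SimpleGraph V) : ℕ :=
  sInf {r : ℕ | ∃ v : V, G.ecc v = r}

namespace KDomAux

variable {V : Type*}

inductive RW (r : V → V → Prop) (s : Set V) : V → V → ℕ → Prop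
  | refl (a : V) : RW r s a a 0
  | cons {a b c : V} {n : ℕ} (hab : r a b) (hb : b ∈ s) (h : RW r s b c n) : RW r s a c (n + 1)

def Reach (r : V → V → Prop) (s : Set V) (a b : V) : Prop := ∃ n, RW r s a b n

noncomputable def rdist (r : V → V → Prop) (s : Set V) (a b : V) : ℕ :=
  sInf {n | RW r s a b n}

variable {r : V → V → Prop} {s t : Set V} {a b c x : V} {n m : ℕ}

theorem RW.trans (h1 : RW r s a b n) (h2 : RW r s b c m) : RW r s a c (n + m) := by
  induction h1 with
  | refl => simpa using h2
  | @cons a' b' c' n' hab hb h ih =>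
    have h3 := RW.cons hab hb (ih h2)
    have e : n' + m + 1 = n' + 1 + m := by omega
    exact e ▸ h3

theorem RW.mono (hst : s ⊆ t) (h : RW r s a b n) : RW r t a b n := by
  induction h with
  | refl => exact RW.refl _
  | cons hab hb _ ih => exact RW.cons hab (hst hb) ih

theorem RW.reverse (hsymm : ∀ a b, r a b → r b a) (ha : a ∈ s) (h : RW r s a b n) :
    RW r s b a n := by
  induction h with
  | refl => exact RW.refl _
  | @cons a' b' c' n' hab hb h ih =>
    exact (ih hb).trans (RW.cons (hsymm _ _ hab) ha (RW.refl _))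

theorem rdist_le (h : RW r s a b n) : rdist r s a b ≤ n := Nat.sInf_le h

theorem Reach.rw_rdist (h : Reach r s a b) : RW r s a b (rdist r s a b) := Nat.sInf_mem h

@[simp] theorem rdist_self : rdist r s a a = 0 :=
  Nat.le_zero.mp (rdist_le (RW.refl a))

theorem Reach.eq_of_rdist_eq_zero (h : Reach r s a b) (h0 : rdist r s a b = 0) : a = b := by
  have h1 := h.rw_rdist
  rw [h0] at h1
  cases h1
  rfl

theorem rdist_mono (hst : s ⊆ t) (h : Reach r s a b) : rdist r t a b ≤ rdist r s a b :=
  rdist_le (h.rw_rdist.mono hst)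

/-- extract the last step of a chain. -/
theorem RW.last_step (ha : a ∈ s) (h : RW r s a b (n + 1)) :
    ∃ y ∈ s, r y b ∧ RW r s a y n := by
  induction n generalizing a with
  | zero =>
    cases h with
    | cons hab hb h1 =>
      cases h1
      exact ⟨a, ha, hab, RW.refl _⟩
  | succ m ih =>
    cases h with
    | @cons _ b' _ _ hab hb h1 =>
      obtain ⟨y, hy, hyb, hrw⟩ := ih hb h1
      exact ⟨y, hy, hyb, RW.cons hab hb hrw⟩

/-- a chain from `a` to `b` that is no longer than the distance from `a` to `x`
can avoid `x` (when `x ≠ b`). -/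
theorem RW.avoid (h : RW r s a b n) (hxb : x ≠ b) (hn : n ≤ rdist r s a x) :
    RW r (s \ {x}) a b n := by
  induction h with
  | refl => exact RW.refl _
  | @cons a' b' c' n' hab hb h ih =>
    by_cases hbx : b' = x
    · subst hbx
      have h1 : rdist r s a' b' ≤ 1 := rdist_le (RW.cons hab hb (RW.refl _))
      -- hn : n' + 1 ≤ rdist r s a' b' ≤ 1, so n' = 0, so b' = c', contradiction hxb
      have hn0 : n' = 0 := by omega
      subst hn0
      cases h
      exact absurd rfl hxb
    · -- need n' ≤ rdist r s b' x
      by_cases hreach : Reach r s b' x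
      · have h2 : RW r s a' x (rdist r s b' x + 1) :=
          RW.cons hab hb hreach.rw_rdist
        have h3 : rdist r s a' x ≤ rdist r s b' x + 1 := rdist_le h2
        have h4 : n' ≤ rdist r s b' x := by omega
        exact RW.cons hab ⟨hb, hbx⟩ (ih hxb h4)
      · -- chain from b' can never meet x
        have key : ∀ {u v m}, RW r s u v m → ¬ Reach r s u x → RW r (s \ {x}) u v m := by
          intro u v m h5 hnr
          induction h5 with
          | refl => exact RW.refl _
          | @cons u' v' w' m' hub hv h6 ih2 =>
            have hvx : v' ≠ x := by
              rintro rfl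
              exact hnr ⟨1, RW.cons hub hv (RW.refl _)⟩
            have hnr2 : ¬ Reach r s v' x := by
              rintro ⟨m2, h7⟩
              exact hnr ⟨m2 + 1, RW.cons hub hv h7⟩
            exact RW.cons hub ⟨hv, hvx⟩ (ih2 hnr2)
        exact RW.cons hab ⟨hb, hbx⟩ (key h hreach)

end KDomAux

namespace KDomAux2
open KDomAux

variable {V : Type*} {r : V → V → Prop} {s : Set V} {a b v w x z : V} {n : ℕ}

theorem rdist_pos (h : Reach r s a b) (hab : a ≠ b) : 1 ≤ rdist r s a b := by
  rw [Nat.one_le_iff_ne_zero]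
  exact fun h0 => hab (h.eq_of_rdist_eq_zero h0)

theorem rdist_le_add_one (h : Reach r s a v) (hvw : r v w) (hw : w ∈ s) :
    rdist r s a w ≤ rdist r s a v + 1 :=
  rdist_le (h.rw_rdist.trans (RW.cons hvw hw (RW.refl _)))

/-- extract a neighbor of `x` distinct from `x`. -/
theorem exists_nbr (hne : ∀ a b, r a b → a ≠ b) (hz : z ∈ s) (hzx : z ≠ x)
    (h : Reach r s z x) : ∃ y ∈ s, y ≠ x ∧ r y x := by
  have h1 := h.rw_rdist
  rcases hd : rdist r s z x with _ | m
  · exact absurd (h.eq_of_rdist_eq_zero hd) hzx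
  · rw [hd] at h1
    obtain ⟨y, hy, hyx, hrw⟩ := h1.last_step hz
    refine ⟨y, hy, fun hyx2 => ?_, hyx⟩
    subst hyx2
    have := rdist_le hrw
    omega

/-- erasing a farthest vertex preserves connectivity. -/
theorem erase_conn [DecidableEq V] {s : Finset V} (hsymm : ∀ a b, r a b → r b a)
    (hconn : ∀ a ∈ s, ∀ b ∈ s, Reach r ↑s a b) (hz : z ∈ s) (hx : x ∈ s)
    (hmax : ∀ v ∈ s, rdist r ↑s z v ≤ rdist r ↑s z x) (hzx : z ≠ x) :
    ∀ a ∈ s.erase x, ∀ b ∈ s.erase x, Reach r ↑(s.erase x) a b := by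
  have hz' : z ∈ (↑s : Set V) \ {x} := ⟨hz, hzx⟩
  have key : ∀ b ∈ s.erase x, Reach r (↑s \ {x} : Set V) z b := by
    intro b hb
    have hbs := Finset.mem_of_mem_erase hb
    have hbx : x ≠ b := fun h => (Finset.ne_of_mem_erase hb) h.symm
    exact ⟨_, ((hconn z hz b hbs).rw_rdist).avoid hbx (hmax b hbs)⟩
  intro a ha b hb
  obtain ⟨n1, h1⟩ := key a ha
  obtain ⟨n2, h2⟩ := key b hb
  rw [Finset.coe_erase]
  exact ⟨n1 + n2, (h1.reverse hsymm hz').trans h2⟩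

theorem center [DecidableEq V] (hsymm : ∀ a b, r a b → r b a)
    (hne : ∀ a b, r a b → a ≠ b) :
    ∀ n (s : Finset V), s.card ≤ n → s.Nonempty →
    (∀ a ∈ s, ∀ b ∈ s, Reach r ↑s a b) →
    ∃ a ∈ s, ∃ b ∈ s, rdist r ↑s a b ≤ 1 ∧
      ∀ v ∈ s, 2 * min (rdist r ↑s a v) (rdist r ↑s b v) + rdist r ↑s a b < s.card := by
  intro n
  induction n with
  | zero =>
    intro s hcard hnon _
    have := Finset.card_pos.mpr hnon
    omega
  | succ n ih =>
    intro s hcard hnon hconn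
    by_cases hle : s.card ≤ n
    · exact ih s hle hnon hconn
    have hc : s.card = n + 1 := by omega
    by_cases h1 : s.card = 1
    · obtain ⟨w, rfl⟩ := Finset.card_eq_one.mp h1
      refine ⟨w, by simp, w, by simp, by simp, fun v hv => ?_⟩
      simp only [Finset.mem_singleton] at hv
      subst hv
      simp [h1]
    by_cases h2 : s.card = 2
    · obtain ⟨a, b, hab, rfl⟩ := Finset.card_eq_two.mp h2
      have has : a ∈ ({a, b} : Finset V) := by simp
      have hbs : b ∈ ({a, b} : Finset V) := by simp
      have hd1 : rdist r ↑({a, b} : Finset V) a b ≤ 1 := by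
        have hr := (hconn a has b hbs).rw_rdist
        rcases hd : rdist r ↑({a, b} : Finset V) a b with _ | m
        · omega
        · rw [hd] at hr
          cases hr with
          | @cons _ c _ _ hac hc hrest =>
            have hca : c ≠ a := (hne a c hac).symm
            have hcb : c = b := by
              simp only [Finset.coe_insert, Finset.coe_singleton, Set.mem_insert_iff,
                Set.mem_singleton_iff] at hc
              tauto
            subst hcb
            have h9 := rdist_le (RW.cons hac hc (RW.refl _))
            omega
      refine ⟨a, has, b, hbs, hd1, fun v hv => ?_⟩
      have hmle := min_le_left (rdist r ↑({a, b} : Finset V) a v)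
        (rdist r ↑({a, b} : Finset V) b v)
      have hmri := min_le_right (rdist r ↑({a, b} : Finset V) a v)
        (rdist r ↑({a, b} : Finset V) b v)
      simp only [Finset.mem_insert, Finset.mem_singleton] at hv
      rcases hv with hva | hvb
      · have hz0 : rdist r ↑({a, b} : Finset V) a v = 0 := by rw [hva]; exact rdist_self
        omega
      · have hz0 : rdist r ↑({a, b} : Finset V) b v = 0 := by rw [hvb]; exact rdist_self
        omega
    -- main case: s.card ≥ 3
    have hc3 : 3 ≤ s.card := by omega
    obtain ⟨z, hz⟩ := hnon
    obtain ⟨x, hx, hmax⟩ := s.exists_max_image (rdist r ↑s z) ⟨z, hz⟩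
    have hzx : z ≠ x := by
      obtain ⟨v, hv, hvz⟩ := Finset.exists_mem_ne (s := s) (by omega) z
      have h3 : 1 ≤ rdist r ↑s z v := rdist_pos (hconn z hz v hv) (Ne.symm hvz)
      have h4 := hmax v hv
      rintro rfl
      simp at h3 h4
      omega
    set s' := s.erase x with hs'
    have hzs' : z ∈ s' := Finset.mem_erase.mpr ⟨hzx, hz⟩
    have hcard' : s'.card = s.card - 1 := Finset.card_erase_of_mem hx
    have hconn' : ∀ a ∈ s', ∀ b ∈ s', Reach r ↑s' a b :=
      erase_conn hsymm hconn hz hx hmax hzx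
    obtain ⟨y1, hy1s, hy1x, hry1x⟩ := exists_nbr hne hz hzx (hconn z hz x hx)
    have hy1s' : y1 ∈ s' := Finset.mem_erase.mpr ⟨hy1x, hy1s⟩
    -- second removal
    obtain ⟨x2, hx2, hmax2⟩ := s'.exists_max_image (rdist r ↑s' y1) ⟨y1, hy1s'⟩
    have hy1x2 : y1 ≠ x2 := by
      obtain ⟨v, hv, hvy1⟩ := Finset.exists_mem_ne (s := s') (by omega) y1
      have h3 : 1 ≤ rdist r ↑s' y1 v := rdist_pos (hconn' y1 hy1s' v hv) (Ne.symm hvy1)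
      have h4 := hmax2 v hv
      rintro rfl
      simp at h3 h4
      omega
    set s'' := s'.erase x2 with hs''
    have hcard'' : s''.card = s.card - 2 := by
      rw [hs'', Finset.card_erase_of_mem hx2, hcard']; omega
    have hconn'' : ∀ a ∈ s'', ∀ b ∈ s'', Reach r ↑s'' a b :=
      erase_conn hsymm hconn' hy1s' hx2 hmax2 hy1x2
    obtain ⟨y2, hy2s', hy2x2, hry2x2⟩ := exists_nbr hne hy1s' hy1x2 (hconn' y1 hy1s' x2 hx2)
    have hy1s'' : y1 ∈ s'' := Finset.mem_erase.mpr ⟨hy1x2, hy1s'⟩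
    have hy2s'' : y2 ∈ s'' := Finset.mem_erase.mpr ⟨hy2x2, hy2s'⟩
    have hnon'' : s''.Nonempty := ⟨y1, hy1s''⟩
    obtain ⟨a, ha'', b, hb'', hab1, hbound⟩ := ih s'' (by omega) hnon'' hconn''
    have hsub : s'' ⊆ s := fun u hu =>
      Finset.mem_of_mem_erase (Finset.mem_of_mem_erase hu)
    have hsubc : (↑s'' : Set V) ⊆ ↑s := Finset.coe_subset.mpr hsub
    have has : a ∈ s := hsub ha''
    have hbs2 : b ∈ s := hsub hb''
    -- rdist in s is at most rdist in s''
    have hmono : ∀ u ∈ s'', ∀ v ∈ s'', rdist r ↑s u v ≤ rdist r ↑s'' u v :=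
      fun u hu v hv => rdist_mono hsubc (hconn'' u hu v hv)
    have habs : rdist r ↑s a b ≤ rdist r ↑s'' a b := hmono a ha'' b hb''
    refine ⟨a, has, b, hbs2, le_trans habs hab1, fun v hv => ?_⟩
    by_cases hvs'' : v ∈ s''
    · have h5 := hbound v hvs''
      have h6 := hmono a ha'' v hvs''
      have h7 := hmono b hb'' v hvs''
      have h8 : s''.card < s.card := by omega
      have : min (rdist r ↑s a v) (rdist r ↑s b v)
          ≤ min (rdist r ↑s'' a v) (rdist r ↑s'' b v) := min_le_min h6 h7
      omega
    · -- v = x or v = x2; it has a neighbor y ∈ s''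
      have hvx : v = x ∨ v = x2 := by
        by_contra hcon
        push_neg at hcon
        exact hvs'' (Finset.mem_erase.mpr ⟨hcon.2, Finset.mem_erase.mpr ⟨hcon.1, hv⟩⟩)
      obtain ⟨y, hys'', hryv⟩ : ∃ y, y ∈ s'' ∧ r y v := by
        rcases hvx with rfl | rfl
        · exact ⟨y1, hy1s'', hry1x⟩
        · exact ⟨y2, hy2s'', hry2x2⟩
      have hys : y ∈ s := hsub hys''
      have hvss : v ∈ (↑s : Set V) := hv
      have hav : rdist r ↑s a v ≤ rdist r ↑s a y + 1 :=
        rdist_le_add_one (hconn a has y hys) hryv hvss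
      have hbv : rdist r ↑s b v ≤ rdist r ↑s b y + 1 :=
        rdist_le_add_one (hconn b hbs2 y hys) hryv hvss
      have h5 := hbound y hys''
      have h6 := hmono a ha'' y hys''
      have h7 := hmono b hb'' y hys''
      have h8 : s''.card + 2 ≤ s.card := by omega
      have h9 : min (rdist r ↑s a v) (rdist r ↑s b v)
          ≤ min (rdist r ↑s'' a y) (rdist r ↑s'' b y) + 1 := by
        rcases le_total (rdist r ↑s'' a y) (rdist r ↑s'' b y) with hle2 | hle2
        · exact le_trans (min_le_left _ _) (by omega)
        · exact le_trans (min_le_right _ _) (by omega)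
      omega

end KDomAux2

namespace KDomMain
open KDomAux KDomAux2 SimpleGraph Walk

variable {V : Type*} {G : SimpleGraph V} {k : ℕ} {S : Set V} {u v : V}

lemma distA (hG : G.Connected) (p : G.Walk u v) (i : ℕ) : G.dist u (p.getVert i) ≤ i := by
  induction i with
  | zero => simp [Walk.getVert_zero]
  | succ i ih =>
    by_cases h : i < p.length
    · have hadj := p.adj_getVert_succ h
      have h1 : G.dist (p.getVert i) (p.getVert (i + 1)) = 1 :=
        SimpleGraph.dist_eq_one_iff_adj.mpr hadj
      have h2 := hG.dist_triangle (u := u) (v := p.getVert i) (w := p.getVert (i + 1))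
      omega
    · rw [Walk.getVert_of_length_le p (by omega)]
      exact le_trans (SimpleGraph.dist_le p) (by omega)

lemma distB (p : G.Walk u v) (i : ℕ) : G.dist (p.getVert i) v ≤ p.length - i := by
  induction p generalizing i with
  | nil =>
    rw [Walk.getVert_of_length_le _ (Nat.zero_le i)]
    simp [SimpleGraph.dist_self]
  | @cons a b c h q ih =>
    cases i with
    | zero =>
      simpa using SimpleGraph.dist_le (Walk.cons h q)
    | succ i =>
      rw [Walk.getVert_cons_succ]
      have h1 := ih i
      have h2 : (Walk.cons h q).length = q.length + 1 := Walk.length_cons h q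
      omega

lemma dom_reach (hG : G.Connected) (hS : G.IsKDomSet k S) (v : V) (hv : v ∈ S) :
    ∀ u ∈ S, Reach (fun a b => a ≠ b ∧ G.dist a b ≤ 2 * k + 1) S u v := by
  have main : ∀ d, ∀ u ∈ S, G.dist u v ≤ d →
      Reach (fun a b => a ≠ b ∧ G.dist a b ≤ 2 * k + 1) S u v := by
    intro d
    induction d with
    | zero =>
      intro u hu h0
      have : u = v := hG.dist_eq_zero_iff.mp (by omega)
      subst this
      exact ⟨0, RW.refl u⟩
    | succ d ih =>
      intro u hu hle
      by_cases hd : G.dist u v ≤ 2 * k + 1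
      · by_cases huv : u = v
        · subst huv; exact ⟨0, RW.refl u⟩
        · exact ⟨1, RW.cons ⟨huv, hd⟩ hv (RW.refl v)⟩
      · push_neg at hd
        obtain ⟨p, hp⟩ := hG.exists_walk_length_eq_dist u v
        set x := p.getVert (k + 1) with hx
        have h1 : G.dist u x ≤ k + 1 := distA hG p (k + 1)
        have h2 : G.dist x v ≤ p.length - (k + 1) := distB p (k + 1)
        obtain ⟨s0, hs0, q, hq⟩ := hS x
        have hs0x : G.dist s0 x ≤ k := le_trans (SimpleGraph.dist_le q) hq
        have hxs0 : G.dist x s0 ≤ k := by rwa [SimpleGraph.dist_comm]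
        have hus0 : G.dist u s0 ≤ 2 * k + 1 := by
          have := hG.dist_triangle (u := u) (v := x) (w := s0)
          omega
        have hs0v : G.dist s0 v ≤ d := by
          have := hG.dist_triangle (u := s0) (v := x) (w := v)
          omega
        obtain ⟨m, hm⟩ := ih s0 hs0 hs0v
        by_cases hus : u = s0
        · subst hus; exact ⟨m, hm⟩
        · exact ⟨m + 1, RW.cons ⟨hus, hus0⟩ hs0 hm⟩
  intro u hu
  exact main (G.dist u v) u hu le_rfl

lemma rw_dist (hG : G.Connected) {a b : V} {n : ℕ}
    (h : RW (fun a b => a ≠ b ∧ G.dist a b ≤ 2 * k + 1) S a b n) :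
    G.dist a b ≤ (2 * k + 1) * n := by
  induction h with
  | refl => simp
  | @cons a' b' c' n' hab hb _ ih =>
    have h1 := hG.dist_triangle (u := a') (v := b') (w := c')
    have h2 : (2 * k + 1) * (n' + 1) = (2 * k + 1) * n' + (2 * k + 1) := by ring
    have h3 := hab.2
    omega

end KDomMain


/-- If `G` is a finite connected graph with radius `r`, then `γ_k(G) ≥ 2r/(2k+1)`. -/
theorem kDomNum_ge_radius {V : Type*} [Fintype V] (k : ℕ) (hk : 1 ≤ k)
    (G : SimpleGraph V) (hG : G.Connected) :
    (2 * (G.rad : ℝ)) / (2 * k + 1) ≤ (G.kDomNum k : ℝ) := by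
  classical
  open KDomAux KDomAux2 KDomMain in
  have hsetne : {n : ℕ | ∃ S : Set V, G.IsKDomSet k S ∧ S.ncard = n}.Nonempty :=
    ⟨(Set.univ : Set V).ncard, Set.univ,
      fun v => ⟨v, trivial, SimpleGraph.Walk.nil, by simp⟩, rfl⟩
  obtain ⟨S, hS, hcard⟩ := Nat.sInf_mem hsetne
  set m := G.kDomNum k with hm
  have hSfin : S.Finite := Set.toFinite S
  set sF := hSfin.toFinset with hsF
  have hcoe : (↑sF : Set V) = S := hSfin.coe_toFinset
  have hcardF : sF.card = m := by
    have h0 : S.ncard = m := hcard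
    rw [← h0, Set.ncard_eq_toFinset_card S hSfin]
  have hnonV : Nonempty V := hG.nonempty
  obtain ⟨v0⟩ := hnonV
  have hSnon : sF.Nonempty := by
    obtain ⟨u, hu, -⟩ := hS v0
    exact ⟨u, hSfin.mem_toFinset.mpr hu⟩
  set Rel : V → V → Prop := fun a b => a ≠ b ∧ G.dist a b ≤ 2 * k + 1 with hRel
  have hsymm : ∀ a b, Rel a b → Rel b a := by
    intro a b ⟨h1, h2⟩
    exact ⟨h1.symm, by rwa [SimpleGraph.dist_comm]⟩
  have hnerel : ∀ a b, Rel a b → a ≠ b := fun a b h => h.1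
  have hconn : ∀ a ∈ sF, ∀ b ∈ sF, KDomAux.Reach Rel ↑sF a b := by
    intro a ha b hb
    rw [hcoe]
    exact KDomMain.dom_reach hG hS b (hSfin.mem_toFinset.mp hb) a (hSfin.mem_toFinset.mp ha)
  obtain ⟨a, ha, b, hb, hab1, hbound⟩ :=
    KDomAux2.center hsymm hnerel sF.card sF le_rfl hSnon hconn
  have hreachab := hconn a ha b hb
  -- a useful translation: rdist controls graph distance
  have htrans : ∀ u ∈ sF, ∀ w ∈ sF,
      G.dist u w ≤ (2 * k + 1) * KDomAux.rdist Rel ↑sF u w := by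
    intro u hu w hw
    exact KDomMain.rw_dist hG (KDomAux.Reach.rw_rdist (hconn u hu w hw))
  -- find center vertex c with universal bound
  have key : ∃ c : V, ∀ v : V, 2 * G.dist c v ≤ (2 * k + 1) * m := by
    rcases hd : KDomAux.rdist Rel ↑sF a b with _ | e
    · -- rdist a b = 0 : a = b
      have hab : a = b := hreachab.eq_of_rdist_eq_zero hd
      subst hab
      refine ⟨a, fun v => ?_⟩
      obtain ⟨s0, hs0, q, hq⟩ := hS v
      have hs0F : s0 ∈ sF := hSfin.mem_toFinset.mpr hs0
      have hbd := hbound s0 hs0F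
      rw [hd] at hbd
      set da := KDomAux.rdist Rel ↑sF a s0 with hda
      have h1 : G.dist a s0 ≤ (2 * k + 1) * da := htrans a ha s0 hs0F
      have h2 : G.dist s0 v ≤ k := le_trans (SimpleGraph.dist_le q) hq
      have h3 := hG.dist_triangle (u := a) (v := s0) (w := v)
      have h4 : 2 * da + 1 ≤ m := by
        have := min_self da
        omega
      have h5 : (2 * k + 1) * (2 * da + 1) ≤ (2 * k + 1) * m :=
        Nat.mul_le_mul_left _ h4
      have h6 : (2 * k + 1) * (2 * da + 1) = 2 * ((2 * k + 1) * da) + 2 * k + 1 := by ring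
      omega
    · -- rdist a b = e+1 ≤ 1, so = 1, and Rel a b holds on the first step
      have he : e = 0 := by omega
      subst he
      have hrw := hreachab.rw_rdist
      rw [hd] at hrw
      have hRab : Rel a b ∧ b ∈ (↑sF : Set V) := by
        cases hrw with
        | @cons _ c' _ _ hac hc' hrest =>
          cases hrest
          exact ⟨hac, hc'⟩
      obtain ⟨⟨hab_ne, hab_le⟩, hbmem⟩ := hRab
      obtain ⟨p, hp⟩ := hG.exists_walk_length_eq_dist a b
      set c := p.getVert k with hc
      have hca : G.dist a c ≤ k := KDomMain.distA hG p k
      have hcb : G.dist c b ≤ k + 1 := by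
        have h7 := KDomMain.distB p k
        rw [← hc] at h7
        have h8 : p.length ≤ 2 * k + 1 := by omega
        omega
      refine ⟨c, fun v => ?_⟩
      obtain ⟨s0, hs0, q, hq⟩ := hS v
      have hs0F : s0 ∈ sF := hSfin.mem_toFinset.mpr hs0
      have hbd := hbound s0 hs0F
      rw [hd] at hbd
      set da := KDomAux.rdist Rel ↑sF a s0 with hda
      set db := KDomAux.rdist Rel ↑sF b s0 with hdb
      have h1a : G.dist a s0 ≤ (2 * k + 1) * da := htrans a ha s0 hs0F
      have h1b : G.dist b s0 ≤ (2 * k + 1) * db := htrans b hb s0 hs0F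
      have h2 : G.dist s0 v ≤ k := le_trans (SimpleGraph.dist_le q) hq
      have hac' : G.dist c a = G.dist a c := SimpleGraph.dist_comm
      rcases le_total da db with hmin | hmin
      · have h4 : 2 * da + 2 ≤ m := by
          have : min da db = da := min_eq_left hmin
          omega
        have h5 : (2 * k + 1) * (2 * da + 2) ≤ (2 * k + 1) * m :=
          Nat.mul_le_mul_left _ h4
        have h6 : (2 * k + 1) * (2 * da + 2) = 2 * ((2 * k + 1) * da) + 4 * k + 2 := by
          ring
        have t1 := hG.dist_triangle (u := c) (v := a) (w := s0)
        have t2 := hG.dist_triangle (u := c) (v := s0) (w := v)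
        omega
      · have h4 : 2 * db + 2 ≤ m := by
          have : min da db = db := min_eq_right hmin
          omega
        have h5 : (2 * k + 1) * (2 * db + 2) ≤ (2 * k + 1) * m :=
          Nat.mul_le_mul_left _ h4
        have h6 : (2 * k + 1) * (2 * db + 2) = 2 * ((2 * k + 1) * db) + 4 * k + 2 := by
          ring
        have t1 := hG.dist_triangle (u := c) (v := b) (w := s0)
        have t2 := hG.dist_triangle (u := c) (v := s0) (w := v)
        omega
  obtain ⟨c, hcbound⟩ := key
  have hecc : G.ecc c ≤ (2 * k + 1) * m / 2 := by
    have hne2 : {d : ℕ | ∃ u : V, G.dist c u = d}.Nonempty := ⟨0, c, SimpleGraph.dist_self⟩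
    have hsup : sSup {d : ℕ | ∃ u : V, G.dist c u = d} ≤ (2 * k + 1) * m / 2 := by
      apply csSup_le hne2
      rintro d ⟨u, rfl⟩
      have := hcbound u
      omega
    exact hsup
  have hrad : G.rad ≤ G.ecc c := Nat.sInf_le ⟨c, rfl⟩
  have hfinal : 2 * G.rad ≤ (2 * k + 1) * m := by omega
  rw [div_le_iff₀ (by positivity)]
  have hcast : ((2 * G.rad : ℕ) : ℝ) ≤ (((2 * k + 1) * m : ℕ) : ℝ) :=
    Nat.cast_le.mpr hfinal
  push_cast at hcast
  linarith
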